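/- arXiv:2501.03189 — 2 statements merged into one kernel-verified Lean document; each statement's English description precedes it below -/
import Mathlib

section
/- Define S_{C1,C2}(x) = Σ_{m,n≥0} q^{4·C(m+1,2)+2·C(n+1,2)+2mn+C1·m+C2·n} x^{2m+n} / ((q;q)_m (q;q)_n). Then S_{−2,−1}(x) − S_{−1,−1}(x) = x²q² S_{0,0}(xq). -/
noncomputable section

/-- Base coefficient ring: formal Laurent series over ℚ (a field), so that
integer powers of `q` and inverses of Pochhammer symbols make sense. -/
abbrev R : Type := LaurentSeries ℚ

/-- The formal variable `q`. -/
def q : R := HahnSeries.single 1 1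

/-- The finite q-Pochhammer symbol `(a; b)_n = ∏_{j=1}^n (1 - a b^(j-1))`. -/
def poch (a b : R) (n : ℕ) : R := ∏ j ∈ Finset.range n, (1 - a * b ^ j)

/-- Formal substitution `x ↦ c·x` in a power series in `x` over `R`. -/
def subst (c : R) (f : PowerSeries R) : PowerSeries R :=
  PowerSeries.mk fun k => c ^ k * PowerSeries.coeff k f

/-- The Andrews–Gordon (k=3) double series
`S_{C1,C2}(x) = Σ_{m,n} q^{4C(m+1,2)+2C(n+1,2)+2mn+C1 m+C2 n} x^{2m+n}/((q;q)_m (q;q)_n)`,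
as a power series in `x` over `R`. -/
def S (C1 C2 : ℤ) : PowerSeries R :=
  PowerSeries.mk fun k =>
    ∑ p ∈ (Finset.range (k+1) ×ˢ Finset.range (k+1)).filter
        (fun p => 2 * p.1 + p.2 = k),
      q ^ (4 * ((p.1+1).choose 2 : ℤ) + 2 * ((p.2+1).choose 2 : ℤ)
            + 2 * (p.1 : ℤ) * (p.2 : ℤ) + C1 * (p.1 : ℤ) + C2 * (p.2 : ℤ))
        * (poch q q p.1)⁻¹ * (poch q q p.2)⁻¹

lemma q_ne_zero : q ≠ 0 := HahnSeries.single_ne_zero one_ne_zero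

lemma one_sub_q_pow_succ_ne_zero (m : ℕ) : (1 : R) - q ^ (m+1) ≠ 0 := by
  have h : (1 : R) - q ^ (m+1) =
      HahnSeries.ofPowerSeries ℤ ℚ (1 - PowerSeries.X ^ (m+1)) := by
    rw [map_sub, map_one, map_pow, HahnSeries.ofPowerSeries_X]; rfl
  rw [h, map_ne_zero_iff _ HahnSeries.ofPowerSeries_injective]
  intro hc
  have := congrArg (PowerSeries.constantCoeff (R := ℚ)) hc
  simp at this

lemma poch_succ (m : ℕ) : poch q q (m+1) = poch q q m * (1 - q ^ (m+1)) := by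
  rw [poch, Finset.prod_range_succ, ← poch, ← pow_succ']

lemma inv_poch_succ (m : ℕ) :
    (poch q q (m+1))⁻¹ = (poch q q m)⁻¹ * (1 - q ^ (m+1))⁻¹ := by
  rw [poch_succ, mul_inv]

/-- The key one-term computation. -/
lemma key (m n : ℕ) (E1 E0 : ℤ) (hE : E1 = ((2*m+n+2 : ℕ) : ℤ) + E0) :
    q ^ E1 * (poch q q (m+1))⁻¹ * (poch q q n)⁻¹
      - q ^ (E1 + ((m+1 : ℕ) : ℤ)) * (poch q q (m+1))⁻¹ * (poch q q n)⁻¹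
      = q ^ 2 * (q ^ (2*m+n) * (q ^ E0 * (poch q q m)⁻¹ * (poch q q n)⁻¹)) := by
  have hq : q ≠ 0 := q_ne_zero
  have h1 : (1:R) - q ^ (m+1) ≠ 0 := one_sub_q_pow_succ_ne_zero m
  have hc : ((1:R) - q ^ (m+1)) * ((1:R) - q ^ (m+1))⁻¹ = 1 := mul_inv_cancel₀ h1
  rw [hE, inv_poch_succ]
  simp only [zpow_add₀ hq, zpow_natCast]
  linear_combination (q ^ (2*m+n+2) * q ^ E0 * (poch q q m)⁻¹ * (poch q q n)⁻¹) * hc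

theorem andrews_first_equation :
    S (-2) (-1) - S (-1) (-1)
      = PowerSeries.X ^ 2 * PowerSeries.C (q ^ 2) * subst q (S 0 0) := by
  have hq : q ≠ 0 := q_ne_zero
  apply PowerSeries.ext
  intro k
  rw [map_sub, show PowerSeries.X ^ 2 * PowerSeries.C (q ^ 2) * subst q (S 0 0)
        = PowerSeries.C (q ^ 2) * subst q (S 0 0) * PowerSeries.X ^ 2 from by ring,
    PowerSeries.coeff_mul_X_pow']
  by_cases h2 : 2 ≤ k
  · rw [if_pos h2, PowerSeries.coeff_C_mul]
    simp only [S, subst, PowerSeries.coeff_mk]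
    rw [← Finset.sum_sub_distrib, Finset.mul_sum, Finset.mul_sum]
    rw [← Finset.sum_filter_of_ne (p := fun p : ℕ × ℕ => p.1 ≠ 0) ?hz]
    case hz =>
      intro p _ hne
      by_contra h0
      exact hne (by simp [h0])
    refine Finset.sum_nbij' (fun p => (p.1 - 1, p.2)) (fun p => (p.1 + 1, p.2))
      ?_ ?_ ?_ ?_ ?_
    · intro p hp
      simp only [Finset.mem_filter, Finset.mem_product, Finset.mem_range] at hp ⊢
      omega
    · intro p hp
      simp only [Finset.mem_filter, Finset.mem_product, Finset.mem_range] at hp ⊢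
      omega
    · intro p hp
      simp only [Finset.mem_filter, Finset.mem_product, Finset.mem_range] at hp
      ext <;> simp <;> omega
    · intro p hp
      simp only [Finset.mem_filter, Finset.mem_product, Finset.mem_range] at hp
      ext <;> simp
    · intro p hp
      simp only [Finset.mem_filter, Finset.mem_product, Finset.mem_range] at hp
      obtain ⟨m, n⟩ := p
      obtain ⟨⟨⟨hm, hn⟩, hk⟩, hne⟩ := hp
      obtain ⟨m, rfl⟩ := Nat.exists_eq_succ_of_ne_zero hne
      simp only [Nat.succ_eq_add_one, Nat.add_sub_cancel] at hk ⊢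
      have hk2 : k - 2 = 2 * m + n := by omega
      rw [hk2]
      have hch : (((m+1) + 1).choose 2 : ℤ) = ((m+1).choose 2 : ℤ) + (m+1) := by
        rw [Nat.choose_succ_succ (m+1) 1, Nat.choose_one_right]; push_cast; ring
      rw [show (4 * (((m+1)+1).choose 2 : ℤ) + 2 * (((n+1)).choose 2 : ℤ)
            + 2 * ((m+1 : ℕ) : ℤ) * (n : ℤ) + -1 * ((m+1 : ℕ) : ℤ) + -1 * (n : ℤ))
          = (4 * (((m+1)+1).choose 2 : ℤ) + 2 * (((n+1)).choose 2 : ℤ)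
            + 2 * ((m+1 : ℕ) : ℤ) * (n : ℤ) + -2 * ((m+1 : ℕ) : ℤ) + -1 * (n : ℤ))
            + ((m+1 : ℕ) : ℤ) from by push_cast; ring]
      exact key m n _ _ (by rw [hch]; push_cast; ring)
  · rw [if_neg h2]
    simp only [S, PowerSeries.coeff_mk]
    rw [← Finset.sum_sub_distrib]
    apply Finset.sum_eq_zero
    intro p hp
    simp only [Finset.mem_filter, Finset.mem_product, Finset.mem_range] at hp
    have h0 : p.1 = 0 := by omega
    simp [h0]
end
end

section
/- Define S_{C1,C2}(x) = Σ_{m,n≥0} q^{4·C(m+1,2)+2·C(n+1,2)+2mn+C1·m+C2·n} x^{2m+n} / ((q;q)_m (q;q)_n). Then S_{−1,−1}(x) − S_{0,0}(x) = xq S_{−1,−1}(xq). -/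
noncomputable section

namespace AGaux

lemma hq : (q : R) ≠ 0 := by simp [q, HahnSeries.single_ne_zero]

lemma hfac (n : ℕ) : (1 : R) - q ^ (n+1) ≠ 0 := by
  intro h
  have := congrArg (fun f : R => f.coeff 0) h
  simp [q, HahnSeries.single_pow, HahnSeries.coeff_single,
    show ¬((0:ℤ) = (n:ℤ)+1) by omega] at this

lemma poch_succ (n : ℕ) : poch q q (n+1) = poch q q n * (1 - q ^ (n+1)) := by
  rw [poch, Finset.prod_range_succ, ← pow_succ']
  rfl

lemma inv_succ (n : ℕ) :
    (poch q q (n+1))⁻¹ = (poch q q n)⁻¹ * ((1:R) - q ^ (n+1))⁻¹ := by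
  rw [poch_succ, mul_inv]

lemma hcc (n : ℕ) : ((1:R) - q ^ (n+1)) * ((1:R) - q ^ (n+1))⁻¹ = 1 :=
  mul_inv_cancel₀ (hfac n)

lemma hpoch (n : ℕ) : poch q q n ≠ 0 := by
  induction n with
  | zero => simp [poch]
  | succ n ih => rw [poch_succ]; exact mul_ne_zero ih (hfac n)

lemma choose2 (m : ℕ) : (((m+1).choose 2 : ℤ)) * 2 = m * (m+1) := by
  induction m with
  | zero => rfl
  | succ n ih =>
    rw [Nat.choose_succ_succ (n+1) 1]
    push_cast [Nat.choose_one_right]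
    push_cast at ih
    linarith

/-- exponents -/
def e1 (m n : ℕ) : ℕ := 2*m*m + m + n*n + 2*m*n
def e2 (m n : ℕ) : ℕ := 2*m*m + m + n*n + n + 2*m*n
def e3 (m n : ℕ) : ℕ := 2*m*m + 3*m + n*n + 2*m*n + n + 1

def Aa (m n : ℕ) : R := match n with
  | 0 => 0
  | n+1 => q ^ (e1 m (n+1)) * (poch q q m)⁻¹ * (poch q q n)⁻¹
def Bb (m n : ℕ) : R := match m with
  | 0 => 0
  | m+1 => q ^ (e2 (m+1) n) * (poch q q m)⁻¹ * (poch q q n)⁻¹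
def Cc (m n : ℕ) : R := match n with
  | 0 => 0
  | n+1 => q ^ (e3 m (n+1)) * (poch q q m)⁻¹ * (poch q q n)⁻¹

set_option maxHeartbeats 1000000 in
lemma splitG (m n : ℕ) :
    q ^ (e1 m n) * (poch q q m)⁻¹ * (poch q q n)⁻¹
      - q ^ (e2 m n + m) * (poch q q m)⁻¹ * (poch q q n)⁻¹
      = Aa m n + Bb m n := by
  match m, n with
  | 0, 0 => simp [Aa, Bb, e1, e2]
  | 0, n+1 =>
    show _ = q ^ (e1 0 (n+1)) * (poch q q 0)⁻¹ * (poch q q n)⁻¹ + 0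
    rw [inv_succ n,
      show e2 0 (n+1) + 0 = e1 0 (n+1) + (n+1) by simp only [e1, e2] <;> ring,
      pow_add]
    linear_combination (q ^ (e1 0 (n+1)) * (poch q q 0)⁻¹ * (poch q q n)⁻¹) * hcc n
  | m+1, 0 =>
    show _ = 0 + q ^ (e2 (m+1) 0) * (poch q q m)⁻¹ * (poch q q 0)⁻¹
    rw [inv_succ m,
      show e2 (m+1) 0 + (m+1) = e1 (m+1) 0 + (m+1) by simp only [e1, e2] <;> ring,
      show e2 (m+1) 0 = e1 (m+1) 0 by simp only [e1, e2] <;> ring,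
      pow_add]
    linear_combination (q ^ (e1 (m+1) 0) * (poch q q m)⁻¹ * (poch q q 0)⁻¹) * hcc m
  | m+1, n+1 =>
    show _ = q ^ (e1 (m+1) (n+1)) * (poch q q (m+1))⁻¹ * (poch q q n)⁻¹
      + q ^ (e2 (m+1) (n+1)) * (poch q q m)⁻¹ * (poch q q (n+1))⁻¹
    rw [inv_succ m, inv_succ n,
      show e2 (m+1) (n+1) + (m+1) = e1 (m+1) (n+1) + (n+1) + (m+1) by
        simp only [e1, e2] <;> ring,
      show e2 (m+1) (n+1) = e1 (m+1) (n+1) + (n+1) by simp only [e1, e2] <;> ring,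
      pow_add, pow_add]
    linear_combination
      (q ^ (e1 (m+1) (n+1)) * (poch q q m)⁻¹ * (poch q q n)⁻¹
        * (((1:R) - q ^ (n+1))⁻¹ - 1)) * hcc m
      + (q ^ (e1 (m+1) (n+1)) * (poch q q m)⁻¹ * (poch q q n)⁻¹
        * (1 + q ^ (m+1) * ((1:R) - q ^ (m+1))⁻¹)) * hcc n

lemma splitR (m n : ℕ) :
    q ^ (e3 m n) * (poch q q m)⁻¹ * (poch q q n)⁻¹ = Aa m (n+1) + Cc m n := by
  match n with
  | 0 =>
    show _ = q ^ (e1 m 1) * (poch q q m)⁻¹ * (poch q q 0)⁻¹ + 0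
    rw [show e1 m 1 = e3 m 0 by simp only [e1, e3] <;> ring]
    ring
  | n+1 =>
    show _ = q ^ (e1 m (n+1+1)) * (poch q q m)⁻¹ * (poch q q (n+1))⁻¹
      + q ^ (e3 m (n+1)) * (poch q q m)⁻¹ * (poch q q n)⁻¹
    rw [inv_succ n,
      show e1 m (n+1+1) = e3 m (n+1) + (n+1) by simp only [e1, e3] <;> ring,
      pow_add]
    linear_combination (q ^ (e3 m (n+1))
      * (poch q q m)⁻¹ * (poch q q n)⁻¹) * hcc n

lemma BC (m n : ℕ) : Bb (m+1) n = Cc m (n+1) := by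
  show q ^ (e2 (m+1) n) * _ * _ = q ^ (e3 m (n+1)) * _ * _
  rw [show e2 (m+1) n = e3 m (n+1) by simp only [e2, e3] <;> ring]



lemma image_filter (k : ℕ) :
    ((Finset.range (k+1) ×ˢ Finset.range (k+1)).filter (fun p => 2 * p.1 + p.2 = k))
      = (Finset.range (k/2+1)).image (fun m => (m, k - 2*m)) := by
  ext ⟨a, b⟩
  simp only [Finset.mem_filter, Finset.mem_product, Finset.mem_image,
    Finset.mem_range, Prod.mk.injEq]
  constructor
  · rintro ⟨⟨ha, hb⟩, h⟩
    exact ⟨a, by omega, rfl, by omega⟩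
  · rintro ⟨m, hm, rfl, rfl⟩
    omega

lemma coeff_S (C1 C2 : ℤ) (k : ℕ) :
    PowerSeries.coeff k (S C1 C2)
      = ∑ m ∈ Finset.range (k/2+1),
          q ^ (4 * ((m+1).choose 2 : ℤ) + 2 * ((k-2*m+1).choose 2 : ℤ)
            + 2 * (m : ℤ) * ((k-2*m : ℕ) : ℤ) + C1 * (m : ℤ) + C2 * ((k-2*m : ℕ) : ℤ))
            * (poch q q m)⁻¹ * (poch q q (k-2*m))⁻¹ := by
  rw [S, PowerSeries.coeff_mk, image_filter, Finset.sum_image]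
  intro x hx y hy h
  exact ((Prod.mk.injEq _ _ _ _).mp h).1

lemma coeffS11 (k : ℕ) :
    PowerSeries.coeff k (S (-1) (-1))
      = ∑ m ∈ Finset.range (k/2+1),
          q ^ (e1 m (k-2*m)) * (poch q q m)⁻¹ * (poch q q (k-2*m))⁻¹ := by
  rw [coeff_S]
  refine Finset.sum_congr rfl fun m _ => ?_
  have h : (4 * ((m+1).choose 2 : ℤ) + 2 * ((k-2*m+1).choose 2 : ℤ)
      + 2 * (m : ℤ) * ((k-2*m : ℕ) : ℤ) + (-1) * (m : ℤ) + (-1) * ((k-2*m : ℕ) : ℤ))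
      = ((e1 m (k-2*m) : ℕ) : ℤ) := by
    have h1 := choose2 m
    have h2 := choose2 (k-2*m)
    simp only [e1]
    push_cast
    linarith
  rw [h, zpow_natCast]

lemma coeffS00 (k : ℕ) :
    PowerSeries.coeff k (S 0 0)
      = ∑ m ∈ Finset.range (k/2+1),
          q ^ (e2 m (k-2*m) + m) * (poch q q m)⁻¹ * (poch q q (k-2*m))⁻¹ := by
  rw [coeff_S]
  refine Finset.sum_congr rfl fun m _ => ?_
  have h : (4 * ((m+1).choose 2 : ℤ) + 2 * ((k-2*m+1).choose 2 : ℤ)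
      + 2 * (m : ℤ) * ((k-2*m : ℕ) : ℤ) + 0 * (m : ℤ) + 0 * ((k-2*m : ℕ) : ℤ))
      = ((e2 m (k-2*m) + m : ℕ) : ℤ) := by
    have h1 := choose2 m
    have h2 := choose2 (k-2*m)
    simp only [e2]
    push_cast
    linarith
  rw [h, zpow_natCast]

end AGaux

open AGaux in
theorem andrews_second_equation :
    S (-1) (-1) - S 0 0
      = PowerSeries.X * PowerSeries.C q * subst q (S (-1) (-1)) := by
  refine PowerSeries.ext fun k => ?_
  rw [map_sub, mul_assoc]
  cases k with
  | zero =>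
    rw [PowerSeries.coeff_zero_X_mul, coeffS11, coeffS00]
    simp [e1, e2]
  | succ j =>
    rw [PowerSeries.coeff_succ_X_mul, PowerSeries.coeff_C_mul, subst,
      PowerSeries.coeff_mk, coeffS11, coeffS00, coeffS11,
      ← Finset.sum_sub_distrib, Finset.mul_sum, Finset.mul_sum]
    have hL : ∑ m ∈ Finset.range ((j+1)/2+1),
        (q ^ (e1 m ((j+1)-2*m)) * (poch q q m)⁻¹ * (poch q q ((j+1)-2*m))⁻¹
          - q ^ (e2 m ((j+1)-2*m) + m) * (poch q q m)⁻¹ * (poch q q ((j+1)-2*m))⁻¹)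
        = (∑ m ∈ Finset.range ((j+1)/2+1), Aa m ((j+1)-2*m))
          + ∑ m ∈ Finset.range ((j+1)/2+1), Bb m ((j+1)-2*m) := by
      rw [← Finset.sum_add_distrib]
      exact Finset.sum_congr rfl fun m _ => splitG m _
    rw [hL]
    have hR : ∑ m ∈ Finset.range (j/2+1),
        q * (q ^ j * (q ^ (e1 m (j-2*m)) * (poch q q m)⁻¹ * (poch q q (j-2*m))⁻¹))
        = (∑ m ∈ Finset.range (j/2+1), Aa m ((j-2*m)+1))
          + ∑ m ∈ Finset.range (j/2+1), Cc m (j-2*m) := by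
      rw [← Finset.sum_add_distrib]
      refine Finset.sum_congr rfl fun m hm => ?_
      rw [← splitR]
      have hm' : m ≤ j/2 := by simpa using Finset.mem_range_succ_iff.mp hm
      have h5 : e3 m (j-2*m) = e1 m (j-2*m) + (2*m + (j-2*m)) + 1 := by
        simp only [e1, e3]; ring
      rw [h5, show 2*m + (j-2*m) = j by omega, pow_add, pow_add]
      ring
    rw [hR]
    have hA : ∑ m ∈ Finset.range ((j+1)/2+1), Aa m ((j+1)-2*m)
        = ∑ m ∈ Finset.range (j/2+1), Aa m ((j-2*m)+1) := by
      rw [← Finset.sum_subset (Finset.range_subset_range.mpr (by omega : j/2+1 ≤ (j+1)/2+1))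
        (fun m hm hnm => ?_)]
      · refine Finset.sum_congr rfl fun m hm => ?_
        have hm' : m ≤ j/2 := by simpa using Finset.mem_range_succ_iff.mp hm
        rw [show (j+1)-2*m = (j-2*m)+1 by omega]
      · have h1 : m ≤ (j+1)/2 := by simpa using Finset.mem_range_succ_iff.mp hm
        have h2 : ¬ m ≤ j/2 := by simpa using fun h => hnm (Finset.mem_range_succ_iff.mpr h)
        rw [show (j+1)-2*m = 0 by omega]
        rfl
    have hB : ∑ m ∈ Finset.range ((j+1)/2+1), Bb m ((j+1)-2*m)
        = ∑ m ∈ Finset.range (j/2+1), Cc m (j-2*m) := by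
      rw [Finset.sum_range_succ']
      have h0 : Bb 0 ((j+1)-2*0) = 0 := rfl
      rw [h0, add_zero]
      have hstep : ∀ i ∈ Finset.range ((j+1)/2),
          Bb (i+1) ((j+1)-2*(i+1)) = Cc i (j-2*i) := by
        intro i hi
        have hi' : i < (j+1)/2 := Finset.mem_range.mp hi
        rw [BC, show ((j+1)-2*(i+1))+1 = j-2*i by omega]
      rw [Finset.sum_congr rfl hstep]
      refine Finset.sum_subset (Finset.range_subset_range.mpr (by omega : (j+1)/2 ≤ j/2+1))
        (fun m hm hnm => ?_)
      have h1 : m ≤ j/2 := by simpa using Finset.mem_range_succ_iff.mp hm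
      have h2 : ¬ m < (j+1)/2 := fun h => hnm (Finset.mem_range.mpr h)
      rw [show j-2*m = 0 by omega]
      rfl
    rw [hA, hB]

end
end
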